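/- (Identity (9), with modular reduction.) With Ω := −(Λ·R div G), for all integers s ≥ 1 and u ≥ s, the polynomial G^s divides Λ^s · P^u − Σ_{i=0}^{s−1} binom(u,i) · Λ^{s−i} · Ω^i · R^{u−i} · G^i; that is, Λ^s P^u ≡ Σ_{i=0}^{s−1} binom(u,i) Λ^{s−i} Ω^i R^{u−i} G^i (mod G^s). -/

import Mathlib

open Polynomial

private lemma aux_ring {A : Type*} [CommRing A] (l p r w g : A)
    (h : l * p = l * r + w * g) :
    ∀ s u : ℕ, 1 ≤ s → s ≤ u →
      g ^ s ∣ l ^ s * p ^ u -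
        ∑ i ∈ Finset.range s, u.choose i • (l ^ (s - i) * w ^ i * r ^ (u - i) * g ^ i) := by
  intro s u hs hsu
  simp only [nsmul_eq_mul]
  obtain ⟨m, rfl⟩ : ∃ m, s = m + 1 := ⟨s - 1, (Nat.succ_pred_eq_of_pos hs).symm⟩
  clear hs
  induction u, hsu using Nat.le_induction with
  | base =>
    have hsum : l ^ (m + 1) * p ^ (m + 1) =
        (∑ i ∈ Finset.range (m + 1),
          ((m+1).choose i : A) * (l ^ (m + 1 - i) * w ^ i * r ^ (m + 1 - i) * g ^ i))
        + w ^ (m + 1) * g ^ (m + 1) := by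
      have h0 : l ^ (m + 1) * p ^ (m + 1) = (w * g + l * r) ^ (m + 1) := by
        rw [← mul_pow, h]; ring_nf
      rw [h0, add_pow, Finset.sum_range_succ]
      congr 1
      · refine Finset.sum_congr rfl fun i hi => ?_
        rw [Finset.mem_range] at hi
        have h1 : m + 1 - i = (m - i) + 1 := by omega
        rw [h1]
        simp only [mul_pow]
        ring
      · simp [mul_pow]
    rw [hsum]
    exact ⟨w ^ (m + 1), by ring⟩
  | succ u hu ih =>
    set A' : ℕ → A := fun i => l ^ (m + 1 - i) * w ^ i * r ^ (u + 1 - i) * g ^ i with hA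
    have expand : ∀ i ∈ Finset.range (m + 1),
        (u.choose i : A) * (p * (l ^ (m + 1 - i) * w ^ i * r ^ (u - i) * g ^ i)) =
        (u.choose i : A) * A' i + (u.choose i : A) * A' (i + 1) := by
      intro i hi
      rw [Finset.mem_range] at hi
      have h1 : m + 1 - i = (m - i) + 1 := by omega
      have h2 : u + 1 - i = (u - i) + 1 := by omega
      have h3 : m + 1 - (i + 1) = m - i := by omega
      have h4 : u + 1 - (i + 1) = u - i := by omega
      have hpl : p * l = l * r + w * g := by rw [mul_comm, h]
      simp only [hA, h1, h2, h3, h4, pow_succ]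
      calc (u.choose i : A) * (p * (l ^ (m - i) * l * w ^ i * r ^ (u - i) * g ^ i))
          = (u.choose i : A) * ((p * l) * (l ^ (m - i) * w ^ i * r ^ (u - i) * g ^ i)) := by
            ring
        _ = _ := by rw [hpl]; ring
    have split : (∑ i ∈ Finset.range (m + 1), ((u+1).choose i : A) * A' i)
        = (∑ i ∈ Finset.range (m + 1), (u.choose i : A) * A' i)
          + ∑ i ∈ Finset.range m, (u.choose i : A) * A' (i + 1) := by
      rw [Finset.sum_range_succ' (fun i => ((u+1).choose i : A) * A' i) m,
          Finset.sum_range_succ' (fun i => ((u : ℕ).choose i : A) * A' i) m]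
      simp only [Nat.choose_succ_succ, Nat.cast_add, add_mul, Nat.choose_zero_right,
        Nat.cast_one, one_mul, Finset.sum_add_distrib]
      ring
    have psum : p * (∑ i ∈ Finset.range (m + 1),
          (u.choose i : A) * (l ^ (m + 1 - i) * w ^ i * r ^ (u - i) * g ^ i)) =
        (∑ i ∈ Finset.range (m + 1), ((u+1).choose i : A) * A' i)
          + (u.choose m : A) * (w ^ (m + 1) * r ^ (u - m) * g ^ (m + 1)) := by
      rw [Finset.mul_sum]
      calc ∑ i ∈ Finset.range (m + 1),
            p * ((u.choose i : A) * (l ^ (m + 1 - i) * w ^ i * r ^ (u - i) * g ^ i))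
          = ∑ i ∈ Finset.range (m + 1),
            ((u.choose i : A) * A' i + (u.choose i : A) * A' (i + 1)) := by
            refine Finset.sum_congr rfl fun i hi => ?_
            rw [← expand i hi]; ring
        _ = (∑ i ∈ Finset.range (m + 1), (u.choose i : A) * A' i)
            + ∑ i ∈ Finset.range (m + 1), (u.choose i : A) * A' (i + 1) :=
            Finset.sum_add_distrib
        _ = (∑ i ∈ Finset.range (m + 1), (u.choose i : A) * A' i)
            + ((∑ i ∈ Finset.range m, (u.choose i : A) * A' (i + 1))
              + (u.choose m : A) * A' (m + 1)) := by
            rw [Finset.sum_range_succ (fun i => ((u.choose i : ℕ) : A) * A' (i + 1)) m]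
        _ = _ := by
            rw [split]
            have hAm : A' (m + 1) = w ^ (m + 1) * r ^ (u - m) * g ^ (m + 1) := by
              simp only [hA]
              have h5 : m + 1 - (m + 1) = 0 := by omega
              have h6 : u + 1 - (m + 1) = u - m := by omega
              rw [h5, h6, pow_zero, one_mul]
            rw [hAm]; ring
    have key : l ^ (m + 1) * p ^ (u + 1) -
        ∑ i ∈ Finset.range (m + 1),
          ((u+1).choose i : A) * (l ^ (m + 1 - i) * w ^ i * r ^ (u + 1 - i) * g ^ i)
        = p * (l ^ (m + 1) * p ^ u -
            ∑ i ∈ Finset.range (m + 1),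
              (u.choose i : A) * (l ^ (m + 1 - i) * w ^ i * r ^ (u - i) * g ^ i))
          + (u.choose m : A) * (w ^ (m + 1) * r ^ (u - m) * g ^ (m + 1)) := by
      have : (∑ i ∈ Finset.range (m + 1),
          ((u+1).choose i : A) * (l ^ (m + 1 - i) * w ^ i * r ^ (u + 1 - i) * g ^ i))
          = ∑ i ∈ Finset.range (m + 1), ((u+1).choose i : A) * A' i := rfl
      rw [this]
      linear_combination psum
    rw [key]
    exact dvd_add (Dvd.dvd.mul_left ih p)
      ⟨(u.choose m : A) * (w ^ (m + 1) * r ^ (u - m)), by ring⟩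

/-- identity (9), with modular reduction: with `Ω := −(Λ·R div G)`,
for `s ≥ 1` and `u ≥ s`,
`G^s ∣ Λ^s · P^u − Σ_{i=0}^{s−1} binom(u,i) · Λ^{s−i} · Ω^i · R^{u−i} · G^i`. -/
theorem stmt6 (F : Type*) [Field F] (n t k : ℕ) (hn : 0 < n) (ht : 1 ≤ t) (hk : 1 ≤ k)
    (htk : t + k - 1 ≤ n - 1)
    (a b : Fin n → F) (ha : Function.Injective a)
    (G : Polynomial F) (hG : G = ∏ ℓ : Fin n, (X - C (a ℓ)))
    (R : Polynomial F) (hRdeg : R.degree < n) (hR : ∀ ℓ, R.eval (a ℓ) = b ℓ)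
    (Λ P : Polynomial F) (hmon : Λ.Monic) (hΛdeg : Λ.natDegree = t)
    (hPdeg : P.natDegree ≤ k - 1) (hdvd : G ∣ Λ * (P - R)) :
    ∀ s u : ℕ, 1 ≤ s → s ≤ u →
      G ^ s ∣ Λ ^ s * P ^ u -
        ∑ i ∈ Finset.range s,
          u.choose i • (Λ ^ (s - i) * (-((Λ * R) /ₘ G)) ^ i * R ^ (u - i) * G ^ i) := by
  have hGmon : G.Monic := by
    rw [hG]; exact monic_prod_of_monic _ _ fun ℓ _ => monic_X_sub_C _
  have hGdeg : G.natDegree = n := by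
    rw [hG, natDegree_prod_of_monic _ _ fun ℓ _ => monic_X_sub_C _]
    simp [natDegree_X_sub_C]
  have key : Λ * P = Λ * R + (-((Λ * R) /ₘ G)) * G := by
    have hD : G ∣ (Λ * P - (Λ * R) %ₘ G) := by
      have h1 : Λ * P - (Λ * R) %ₘ G = Λ * (P - R) + G * ((Λ * R) /ₘ G) := by
        rw [modByMonic_eq_sub_mul_div _ G]; ring
      rw [h1]
      exact dvd_add hdvd (Dvd.intro _ rfl)
    have hlt : (Λ * P).natDegree < n := by
      have h2 : (Λ * P).natDegree ≤ t + (k - 1) :=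
        le_trans natDegree_mul_le (add_le_add hΛdeg.le hPdeg)
      omega
    have hdeg : (Λ * P - (Λ * R) %ₘ G).degree < G.degree := by
      refine lt_of_le_of_lt (degree_sub_le _ _)
        (max_lt ?_ (degree_modByMonic_lt _ hGmon))
      calc (Λ * P).degree ≤ ((Λ * P).natDegree : WithBot ℕ) := degree_le_natDegree
        _ < (n : WithBot ℕ) := by exact_mod_cast hlt
        _ = G.degree := by rw [degree_eq_natDegree hGmon.ne_zero, hGdeg]
    have h0 := eq_zero_of_dvd_of_degree_lt hD hdeg
    have h2 : Λ * P = (Λ * R) %ₘ G := sub_eq_zero.mp h0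
    rw [h2, modByMonic_eq_sub_mul_div _ G]; ring
  exact aux_ring Λ P R _ G key
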